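/- Let G be a connected interval graph on n vertices with interval representation I = ([a_1,b_1],...,[a_n,b_n]), and let B ⊆ {b_1,...,b_n} be a set of endpoints such that at most k intervals of I are disjoint from B, where k < n. Then there exists a set X of at most k edges of G such that α(G/X) ≤ |B|, where G/X denotes the graph obtained by contracting all edges in X. -/

import Mathlib

def intervalGraph {n : ℕ} (J : Fin n → ℝ × ℝ) : SimpleGraph (Fin n) where
  Adj u v := u ≠ v ∧ (Set.Icc (J u).1 (J u).2 ∩ Set.Icc (J v).1 (J v).2).Nonempty
  symm := ⟨by
    rintro u v ⟨h, x, hx⟩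
    exact ⟨h.symm, x, hx.2, hx.1⟩⟩
  loopless := ⟨by rintro v ⟨h, _⟩; exact h rfl⟩

/-- The spanning subgraph of `G` with edge set `X`. -/
def edgeSub {V : Type*} (G : SimpleGraph V) (X : Set (Sym2 V)) : SimpleGraph V where
  Adj u v := G.Adj u v ∧ s(u, v) ∈ X
  symm := ⟨by rintro u v ⟨h, he⟩; exact ⟨h.symm, by rwa [Sym2.eq_swap]⟩⟩
  loopless := ⟨by rintro v ⟨h, _⟩; exact G.irrefl h⟩

/-- The graph `G/X` obtained from `G` by contracting the edges in `X`:
vertices are classes of the reachability relation of the subgraph with edge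
set `X`; distinct classes are adjacent if they contain adjacent vertices. -/
def contract {V : Type*} (G : SimpleGraph V) (X : Set (Sym2 V)) :
    SimpleGraph (Quotient (edgeSub G X).reachableSetoid) where
  Adj c d := c ≠ d ∧ ∃ u v : V,
    Quotient.mk _ u = c ∧ Quotient.mk _ v = d ∧ G.Adj u v
  symm := ⟨by rintro c d ⟨hne, u, v, hu, hv, h⟩; exact ⟨hne.symm, v, u, hv, hu, h.symm⟩⟩
  loopless := ⟨by rintro c ⟨hne, _⟩; exact hne rfl⟩

def IsIndepSet {W : Type*} (G : SimpleGraph W) (s : Set W) : Prop :=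
  s.Pairwise fun u v => ¬ G.Adj u v

private lemma cross_edge {V : Type*} (G : SimpleGraph V) (A : Set V) :
    ∀ {x y : V}, G.Walk x y → x ∉ A → y ∈ A →
      ∃ a b, G.Adj a b ∧ a ∈ A ∧ b ∉ A := by
  intro x y p
  induction p with
  | nil => intro hx hy; exact absurd hy hx
  | @cons u v w h p ih =>
    intro hx hy
    by_cases hv : v ∈ A
    · exact ⟨v, u, h.symm, hv, hx⟩
    · exact ih hv hy

private lemma edgeSub_mono {V : Type*} (G : SimpleGraph V) {X X' : Set (Sym2 V)}
    (h : X ⊆ X') : edgeSub G X ≤ edgeSub G X' := by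
  intro u v hadj
  exact ⟨hadj.1, h hadj.2⟩

private lemma aux_extend {n : ℕ} (G : SimpleGraph (Fin n)) (hconn : G.Connected)
    (T : Set (Fin n)) (hT : T.Nonempty) :
    ∀ (k : ℕ) (X : Finset (Sym2 (Fin n))) (bad : Finset (Fin n)), ↑X ⊆ G.edgeSet →
      (∀ v, ¬ (∃ w ∈ T, (edgeSub G ↑X).Reachable v w) → v ∈ bad) → bad.card ≤ k →
      ∃ Y : Finset (Sym2 (Fin n)), ↑(X ∪ Y) ⊆ G.edgeSet ∧ Y.card ≤ k ∧
        ∀ v, ∃ w ∈ T, (edgeSub G ↑(X ∪ Y)).Reachable v w := by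
  intro k
  induction k with
  | zero =>
    intro X bad hX hbad hcard
    refine ⟨∅, ?_, le_refl _, ?_⟩
    · rw [Finset.union_empty]; exact hX
    · intro v
      rw [Finset.union_empty]
      by_contra hv
      have hmem : v ∈ bad := hbad v hv
      have := Finset.card_pos.mpr ⟨v, hmem⟩
      omega
  | succ m ih =>
    intro X bad hX hbad hcard
    by_cases hall : ∀ v, ∃ w ∈ T, (edgeSub G ↑X).Reachable v w
    · refine ⟨∅, ?_, Nat.zero_le _, ?_⟩
      · rw [Finset.union_empty]; exact hX
      · intro v; rw [Finset.union_empty]; exact hall v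
    · obtain ⟨v, hv⟩ := not_forall.mp hall
      obtain ⟨w, hwT⟩ := hT
      set A : Set (Fin n) := {u | ∃ w' ∈ T, (edgeSub G ↑X).Reachable u w'} with hA
      have hvA : v ∉ A := hv
      have hwA : w ∈ A := ⟨w, hwT, SimpleGraph.Reachable.refl _⟩
      obtain ⟨p⟩ := hconn.preconnected v w
      obtain ⟨a, b, hab, haA, hbA⟩ := cross_edge G A p hvA hwA
      set X' : Finset (Sym2 (Fin n)) := insert s(a, b) X with hX'
      have hXX' : (X : Set (Sym2 (Fin n))) ⊆ ↑X' := by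
        rw [hX', Finset.coe_insert]; exact Set.subset_insert _ _
      have hle : edgeSub G ↑X ≤ edgeSub G ↑X' := edgeSub_mono G hXX'
      have hX'E : ↑X' ⊆ G.edgeSet := by
        rw [hX', Finset.coe_insert]
        intro e he
        rcases Set.mem_insert_iff.mp he with rfl | he
        · exact (G.mem_edgeSet).mpr hab
        · exact hX he
      have hbA' : ∃ w' ∈ T, (edgeSub G ↑X').Reachable b w' := by
        obtain ⟨w', hw'T, hw'⟩ := haA
        have hadj : (edgeSub G ↑X').Adj a b :=
          ⟨hab, by rw [hX', Finset.coe_insert]; exact Set.mem_insert _ _⟩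
        exact ⟨w', hw'T, hadj.symm.reachable.trans (hw'.mono hle)⟩
      have hbad' : ∀ u, ¬ (∃ w' ∈ T, (edgeSub G ↑X').Reachable u w') → u ∈ bad.erase b := by
        intro u hu
        rw [Finset.mem_erase]
        refine ⟨?_, ?_⟩
        · rintro rfl; exact hu hbA'
        · refine hbad u ?_
          intro h
          obtain ⟨w', hw'T, hr⟩ := h
          exact hu ⟨w', hw'T, hr.mono hle⟩
      have hbmem : b ∈ bad := hbad b hbA
      have h1 := Finset.card_erase_of_mem hbmem
      have hcard' : (bad.erase b).card ≤ m := by omega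
      obtain ⟨Y', hY'E, hY'card, hY'⟩ := ih X' (bad.erase b) hX'E hbad' hcard'
      have hun : X ∪ insert s(a, b) Y' = X' ∪ Y' := by
        rw [Finset.union_insert, hX', Finset.insert_union]
      refine ⟨insert s(a, b) Y', ?_, ?_, ?_⟩
      · rw [hun]; exact hY'E
      · exact (Finset.card_insert_le _ _).trans (Nat.succ_le_succ hY'card)
      · rw [hun]; exact hY'

/-- If `G` is a connected interval graph on `n` intervals and `B` is a set of
endpoints such that at most `k < n` intervals are disjoint from `B`, then there
is a set `X` of at most `k` edges with `α(G/X) ≤ |B|`. -/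
theorem stmt14 {n : ℕ} (J : Fin n → ℝ × ℝ) (hJ : ∀ v, (J v).1 ≤ (J v).2)
    (hconn : (intervalGraph J).Connected) (k : ℕ) (hk : k < n)
    (B : Finset ℝ) (hB : ∀ x ∈ B, ∃ v : Fin n, x = (J v).2)
    (hdisj : (Finset.univ.filter fun v : Fin n =>
        ∀ x ∈ B, ¬ ((J v).1 ≤ x ∧ x ≤ (J v).2)).card ≤ k) :
    ∃ X : Finset (Sym2 (Fin n)), ↑X ⊆ (intervalGraph J).edgeSet ∧ X.card ≤ k ∧
      ∀ s : Finset (Quotient (edgeSub (intervalGraph J) ↑X).reachableSetoid),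
        IsIndepSet (contract (intervalGraph J) ↑X) ↑s → s.card ≤ B.card := by
  classical
  set T : Set (Fin n) := {v | ∃ x ∈ B, (J v).1 ≤ x ∧ x ≤ (J v).2} with hTdef
  have hT : T.Nonempty := by
    by_contra hne
    have hall : ∀ v : Fin n, v ∈ Finset.univ.filter fun v : Fin n =>
        ∀ x ∈ B, ¬ ((J v).1 ≤ x ∧ x ≤ (J v).2) := by
      intro v
      refine Finset.mem_filter.mpr ⟨Finset.mem_univ _, ?_⟩
      intro x hx hxv
      exact hne ⟨v, ⟨x, hx, hxv⟩⟩
    have heq := Finset.eq_univ_iff_forall.mpr hall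
    rw [heq, Finset.card_univ, Fintype.card_fin] at hdisj
    omega
  have hinit : ∀ v : Fin n, ¬ (∃ w ∈ T, (edgeSub (intervalGraph J)
        ↑(∅ : Finset (Sym2 (Fin n)))).Reachable v w) →
      v ∈ Finset.univ.filter fun v : Fin n =>
        ∀ x ∈ B, ¬ ((J v).1 ≤ x ∧ x ≤ (J v).2) := by
    intro v hv
    refine Finset.mem_filter.mpr ⟨Finset.mem_univ _, ?_⟩
    intro x hx hxv
    exact hv ⟨v, ⟨x, hx, hxv⟩, SimpleGraph.Reachable.refl _⟩
  obtain ⟨Y, hYE, hYcard, hY⟩ := aux_extend (intervalGraph J) hconn T hT k ∅ _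
    (by simp) hinit hdisj
  refine ⟨∅ ∪ Y, hYE, by simpa using hYcard, ?_⟩
  intro s hs
  have hrep : ∀ c : Quotient (edgeSub (intervalGraph J)
      ↑((∅ : Finset (Sym2 (Fin n))) ∪ Y)).reachableSetoid,
      ∃ x, x ∈ B ∧ ∃ w : Fin n,
        Quotient.mk _ w = c ∧ (J w).1 ≤ x ∧ x ≤ (J w).2 := by
    intro c
    obtain ⟨u, hu⟩ := Quotient.exists_rep c
    obtain ⟨w, hwT, hr⟩ := hY u
    obtain ⟨x, hxB, hx1, hx2⟩ := hwT
    exact ⟨x, hxB, w, (Quotient.sound hr).symm.trans hu, hx1, hx2⟩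
  choose f hfB g hg hg1 hg2 using hrep
  refine Finset.card_le_card_of_injOn f (fun c _ => hfB c) ?_
  intro c hc d hd hfe
  by_contra hne
  have hgne : g c ≠ g d := fun h => hne (by rw [← hg c, ← hg d, h])
  have hadj : (intervalGraph J).Adj (g c) (g d) :=
    ⟨hgne, f c, ⟨hg1 c, hg2 c⟩, by rw [hfe]; exact ⟨hg1 d, hg2 d⟩⟩
  have hcd : (contract (intervalGraph J) ↑((∅ : Finset (Sym2 (Fin n))) ∪ Y)).Adj c d :=
    ⟨hne, g c, g d, hg c, hg d, hadj⟩
  exact hs (Finset.mem_coe.mpr hc) (Finset.mem_coe.mpr hd) hne hcd
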